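/- The set 𝒩₄ of quadruples (m₁,m₂,m₃,m₄) of natural numbers satisfying 2 ≤ m₁ ≤ m₂ ≤ m₃ ≤ m₄, Θ > 0, 2/Θ a positive integer and m₄ ≤ 2/Θ consists exactly of the 7 quadruples: (2,2,2,3), (2,2,2,4), (2,2,2,6), (2,2,3,3), (2,2,4,4), (2,3,3,3), (3,3,3,3). -/

import Mathlib

/-- The orbifold canonical degree `Θ` of a tuple of natural numbers (given as a list). -/
def thetaL (l : List ℕ) : ℚ := -2 + (l.map fun m => 1 - 1 / (m : ℚ)).sum

/-- Membership in `𝒩_r`: the entries are at least `2` and weakly increasing, `Θ > 0`,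
`2/Θ` is a positive integer, and every entry (equivalently, the largest entry `m_r`)
is at most `2/Θ`. -/
def NcondL (l : List ℕ) : Prop :=
  (∀ m ∈ l, 2 ≤ m) ∧ l.Pairwise (· ≤ ·) ∧ 0 < thetaL l ∧
    (∃ n : ℕ, 0 < n ∧ (2 : ℚ) / thetaL l = n) ∧
    ∀ m ∈ l, (m : ℚ) ≤ 2 / thetaL l

set_option maxHeartbeats 2000000 in
theorem stmt_2 (m₁ m₂ m₃ m₄ : ℕ) :
    NcondL [m₁, m₂, m₃, m₄] ↔
      (m₁, m₂, m₃, m₄) ∈ ({(2,2,2,3), (2,2,2,4), (2,2,2,6), (2,2,3,3),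
        (2,2,4,4), (2,3,3,3), (3,3,3,3)} : Set (ℕ × ℕ × ℕ × ℕ)) := by
  constructor
  · rintro ⟨hge, hs, hpos, ⟨n, hn, he⟩, hle⟩
    have h4 := hle m₄ (by simp)
    simp only [List.pairwise_cons, List.mem_cons, List.not_mem_nil] at hs
    have hm1 : 2 ≤ m₁ := hge m₁ (by simp)
    have h12 : m₁ ≤ m₂ := hs.1 m₂ (by simp)
    have h23 : m₂ ≤ m₃ := hs.2.1 m₃ (by simp)
    have h34 : m₃ ≤ m₄ := hs.2.2.1 m₄ (by simp)
    -- bound m₄ ≤ 6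
    have hm4 : m₄ ≤ 6 := by
      have hm10 : (0:ℚ) < m₁ := by positivity
      have hm20 : (0:ℚ) < m₂ := by exact_mod_cast lt_of_lt_of_le (by exact_mod_cast hm10) (Nat.cast_le.mpr h12)
      have hm30 : (0:ℚ) < m₃ := lt_of_lt_of_le hm20 (by exact_mod_cast h23)
      have hm40 : (0:ℚ) < m₄ := lt_of_lt_of_le hm30 (by exact_mod_cast h34)
      have e1 : (1:ℚ)/m₁ ≤ 1/2 := by
        apply div_le_div_of_nonneg_left (by norm_num) (by norm_num)
        exact_mod_cast hm1
      have e2 : (1:ℚ)/m₂ ≤ 1/2 := by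
        apply div_le_div_of_nonneg_left (by norm_num) (by norm_num)
        exact_mod_cast le_trans hm1 h12
      have e3 : (1:ℚ)/m₃ ≤ 1/2 := by
        apply div_le_div_of_nonneg_left (by norm_num) (by norm_num)
        exact_mod_cast le_trans (le_trans hm1 h12) h23
      have e4 : (m₄:ℚ) * (1/m₄) = 1 := by field_simp
      have key : (m₄:ℚ) * thetaL [m₁, m₂, m₃, m₄] ≤ 2 := by
        calc (m₄:ℚ) * thetaL [m₁, m₂, m₃, m₄]
            ≤ (2 / thetaL [m₁, m₂, m₃, m₄]) * thetaL [m₁, m₂, m₃, m₄] :=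
              mul_le_mul_of_nonneg_right h4 (le_of_lt hpos)
          _ = 2 := div_mul_cancel₀ 2 (ne_of_gt hpos)
      have hth : thetaL [m₁, m₂, m₃, m₄]
          = 2 - (1/m₁ + 1/m₂ + 1/m₃ + 1/m₄) := by
        simp [thetaL]; ring
      rw [hth] at key
      have : (m₄:ℚ) ≤ 6 := by nlinarith
      exact_mod_cast this
    have b1 : m₁ ≤ 6 := by omega
    have b2 : m₂ ≤ 6 := by omega
    have b3 : m₃ ≤ 6 := by omega
    have b4 : 2 ≤ m₄ := by omega
    interval_cases m₁ <;> interval_cases m₂ <;> interval_cases m₃ <;> interval_cases m₄ <;>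
      first
      | (norm_num [thetaL] at h4; done)
      | (norm_num [thetaL] at hpos; done)
      | (norm_num; done)
      | (exfalso
         replace he : (3:ℚ) * n = 20 := by rw [← he]; norm_num [thetaL]
         replace he : 3 * n = 20 := by exact_mod_cast he
         omega)
      | (exfalso
         replace he : (5:ℚ) * n = 24 := by rw [← he]; norm_num [thetaL]
         replace he : 5 * n = 24 := by exact_mod_cast he
         omega)
  · intro h
    simp only [Set.mem_insert_iff, Set.mem_singleton_iff, Prod.mk.injEq] at h
    rcases h with ⟨rfl,rfl,rfl,rfl⟩|⟨rfl,rfl,rfl,rfl⟩|⟨rfl,rfl,rfl,rfl⟩|⟨rfl,rfl,rfl,rfl⟩|⟨rfl,rfl,rfl,rfl⟩|⟨rfl,rfl,rfl,rfl⟩|⟨rfl,rfl,rfl,rfl⟩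
    · exact ⟨by simp, by simp, by norm_num [thetaL], ⟨12, by norm_num, by norm_num [thetaL]⟩, by norm_num [thetaL]⟩
    · exact ⟨by simp, by simp, by norm_num [thetaL], ⟨8, by norm_num, by norm_num [thetaL]⟩, by norm_num [thetaL]⟩
    · exact ⟨by simp, by simp, by norm_num [thetaL], ⟨6, by norm_num, by norm_num [thetaL]⟩, by norm_num [thetaL]⟩
    · exact ⟨by simp, by simp, by norm_num [thetaL], ⟨6, by norm_num, by norm_num [thetaL]⟩, by norm_num [thetaL]⟩
    · exact ⟨by simp, by simp, by norm_num [thetaL], ⟨4, by norm_num, by norm_num [thetaL]⟩, by norm_num [thetaL]⟩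
    · exact ⟨by simp, by simp, by norm_num [thetaL], ⟨4, by norm_num, by norm_num [thetaL]⟩, by norm_num [thetaL]⟩
    · exact ⟨by simp, by simp, by norm_num [thetaL], ⟨3, by norm_num, by norm_num [thetaL]⟩, by norm_num [thetaL]⟩
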